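/- Let (s,t) ∈ ℚ²∖ℤ². For every A = ((a,b),(c,d)) ∈ SL(2,ℤ) and every τ ∈ ℍ one has (g_{(s,t)} |₁ A)(τ) := (cτ+d)^{-1} · g_{(s,t)}((aτ+b)/(cτ+d)) = g_{(s,t)A}(τ), where (s,t)A = (sa+tc, sb+td). -/

import Mathlib

/-- The lattice `ℤτ + ℤ`. -/
def lat (τ : ℂ) : Set ℂ := {w : ℂ | ∃ m n : ℤ, w = (m : ℂ) * τ + (n : ℂ)}

/-- The Weierstrass ζ-function attached to a set `Ω ⊂ ℂ`. -/
noncomputable def wzeta (Ω : Set ℂ) (z : ℂ) : ℂ :=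
  1 / z + ∑' ω : {w : ℂ // w ∈ Ω ∧ w ≠ 0},
    (1 / (z - (ω : ℂ)) + 1 / (ω : ℂ) + z / (ω : ℂ) ^ 2)

/-- `g_{(s,t)}(τ) = ζ(τ, sτ + t)`, where `ζ(τ,z) = ζ(τℤ+ℤ, z)`. -/
noncomputable def g (s t : ℚ) (τ : ℂ) : ℂ := wzeta (lat τ) ((s : ℂ) * τ + (t : ℂ))

lemma wzeta_smul (μ : ℂ) (hμ : μ ≠ 0) (Ω : Set ℂ) (z : ℂ) :
    wzeta ((fun w => μ * w) '' Ω) (μ * z) = μ⁻¹ * wzeta Ω z := by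
  unfold wzeta
  let e : {w : ℂ // w ∈ Ω ∧ w ≠ 0} ≃ {w : ℂ // w ∈ (fun w => μ * w) '' Ω ∧ w ≠ 0} :=
    { toFun := fun w => ⟨μ * w, ⟨w, w.2.1, rfl⟩, mul_ne_zero hμ w.2.2⟩
      invFun := fun w => ⟨μ⁻¹ * w, by
        obtain ⟨⟨v, hv, hvw⟩, hw0⟩ := w.2
        have : μ⁻¹ * (w : ℂ) = v := by rw [← hvw]; field_simp
        rw [this]; exact hv, mul_ne_zero (inv_ne_zero hμ) w.2.2⟩
      left_inv := fun w => by
        ext; simp only []; field_simp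
      right_inv := fun w => by
        ext; simp only []; field_simp }
  rw [← Equiv.tsum_eq e]
  have hterm : ∀ w : {w : ℂ // w ∈ Ω ∧ w ≠ 0},
      (1 / (μ * z - ((e w : ℂ))) + 1 / ((e w : ℂ)) + μ * z / ((e w : ℂ)) ^ 2)
        = μ⁻¹ * (1 / (z - (w : ℂ)) + 1 / (w : ℂ) + z / (w : ℂ) ^ 2) := by
    intro w
    have hw : (e w : ℂ) = μ * w := rfl
    rw [hw]
    have h1 : 1 / (μ * z - μ * (w : ℂ)) = μ⁻¹ * (1 / (z - (w : ℂ))) := by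
      rw [← mul_sub, one_div, one_div, mul_inv]
    have h2 : 1 / (μ * (w : ℂ)) = μ⁻¹ * (1 / (w : ℂ)) := by
      rw [one_div, one_div, mul_inv]
    have h3 : μ * z / (μ * (w : ℂ)) ^ 2 = μ⁻¹ * (z / (w : ℂ) ^ 2) := by
      have hw0 := w.2.2
      field_simp
    rw [h1, h2, h3]; ring
  calc 1 / (μ * z) + ∑' w : {w : ℂ // w ∈ Ω ∧ w ≠ 0},
        (1 / (μ * z - ((e w : ℂ))) + 1 / ((e w : ℂ)) + μ * z / ((e w : ℂ)) ^ 2)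
      = μ⁻¹ * (1 / z) + ∑' w : {w : ℂ // w ∈ Ω ∧ w ≠ 0},
        μ⁻¹ * (1 / (z - (w : ℂ)) + 1 / (w : ℂ) + z / (w : ℂ) ^ 2) := by
        rw [one_div, one_div, mul_inv, tsum_congr hterm]
    _ = μ⁻¹ * (1 / z + ∑' w : {w : ℂ // w ∈ Ω ∧ w ≠ 0},
        (1 / (z - (w : ℂ)) + 1 / (w : ℂ) + z / (w : ℂ) ^ 2)) := by
        rw [tsum_mul_left]; ring

lemma denom_ne_zero (a b c d : ℤ) (hA : a * d - b * c = 1) (τ : ℂ) (hτ : 0 < τ.im) :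
    (c : ℂ) * τ + (d : ℂ) ≠ 0 := by
  intro h
  have him := congrArg Complex.im h
  simp [Complex.add_im, Complex.mul_im] at him
  have hc : (c : ℝ) = 0 := by
    rcases him with h' | h'
    · exact_mod_cast h'
    · exact absurd h' (ne_of_gt hτ)
  have hc' : c = 0 := by exact_mod_cast hc
  subst hc'
  simp at h
  have hd : d = 0 := by exact_mod_cast h
  subst hd
  simp at hA

lemma lat_transform (a b c d : ℤ) (hA : a * d - b * c = 1) (τ : ℂ)
    (hcd : (c : ℂ) * τ + (d : ℂ) ≠ 0) :
    lat (((a : ℂ) * τ + (b : ℂ)) / ((c : ℂ) * τ + (d : ℂ)))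
      = (fun w => ((c : ℂ) * τ + (d : ℂ))⁻¹ * w) '' lat τ := by
  ext w
  constructor
  · rintro ⟨m, n, rfl⟩
    refine ⟨(m * a + n * c : ℤ) * τ + (m * b + n * d : ℤ), ⟨m * a + n * c, m * b + n * d, rfl⟩, ?_⟩
    push_cast
    field_simp
    ring
  · rintro ⟨v, ⟨m, n, rfl⟩, rfl⟩
    refine ⟨m * d - n * c, -(m * b) + n * a, ?_⟩
    push_cast
    field_simp
    have key : (a : ℂ) * d - b * c = 1 := by exact_mod_cast hA
    linear_combination (-((m : ℂ) * τ + n)) * key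

/-- for `(s,t) ∈ ℚ²∖ℤ²`, `A = ((a,b),(c,d)) ∈ SL(2,ℤ)` and `τ ∈ ℍ`,
`(g_{(s,t)} |₁ A)(τ) = (cτ+d)⁻¹ g_{(s,t)}((aτ+b)/(cτ+d)) = g_{(s,t)A}(τ)`, where
`(s,t)A = (sa+tc, sb+td)`. -/
theorem g_slash_one (s t : ℚ) (hst : ¬ ∃ m n : ℤ, s = (m : ℚ) ∧ t = (n : ℚ))
    (a b c d : ℤ) (hA : a * d - b * c = 1) (τ : ℂ) (hτ : 0 < τ.im) :
    ((c : ℂ) * τ + (d : ℂ))⁻¹ *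
        g s t (((a : ℂ) * τ + (b : ℂ)) / ((c : ℂ) * τ + (d : ℂ))) =
      g (s * a + t * c) (s * b + t * d) τ := by
  have hcd := denom_ne_zero a b c d hA τ hτ
  set μ : ℂ := ((c : ℂ) * τ + (d : ℂ))⁻¹ with hμdef
  have hμ : μ ≠ 0 := inv_ne_zero hcd
  have hz : (s : ℂ) * (((a : ℂ) * τ + (b : ℂ)) / ((c : ℂ) * τ + (d : ℂ))) + (t : ℂ)
      = μ * (((s * a + t * c : ℚ) : ℂ) * τ + ((s * b + t * d : ℚ) : ℂ)) := by
    rw [hμdef]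
    push_cast
    linear_combination (t : ℂ) * (mul_inv_cancel₀ hcd).symm
  unfold g
  rw [hz, lat_transform a b c d hA τ hcd, ← hμdef, wzeta_smul μ hμ]
  rw [← mul_assoc]
  rw [show μ * μ⁻¹ = 1 from mul_inv_cancel₀ hμ, one_mul]
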